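/- An oriented line (ξ, η) ∈ TP¹ passes through the point (z, t) ∈ ℂ ⊕ ℝ = ℝ³ (i.e., there exists r ∈ ℝ with Φ((ξ,η),r) = (z,t)) if and only if η = ½(z − 2tξ − z̄ξ²). -/
import Mathlib


open Complex ComplexConjugate

noncomputable section

/-- The z = x¹ + ix² coordinate of Φ((ξ,η),r). -/
def Phiz (ξ η : ℂ) (r : ℝ) : ℂ :=
  (2 * (η - conj η * ξ^2) + 2 * ξ * (1 + ξ * conj ξ) * (r : ℂ)) / (1 + ξ * conj ξ)^2

/-- The t = x³ coordinate of Φ((ξ,η),r). -/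
def Phit (ξ η : ℂ) (r : ℝ) : ℂ :=
  (-2 * (η * conj ξ + conj η * ξ) + (1 - ξ^2 * (conj ξ)^2) * (r : ℂ)) / (1 + ξ * conj ξ)^2

/-- The oriented line (ξ,η) ∈ TP¹ passes through the point (z,t) ∈ ℂ ⊕ ℝ = ℝ³
iff η = ½(z − 2tξ − z̄ξ²). -/
theorem stmt18 (ξ η z : ℂ) (t : ℝ) :
    (∃ r : ℝ, Phiz ξ η r = z ∧ Phit ξ η r = (t : ℂ)) ↔
      η = (z - 2 * (t : ℂ) * ξ - conj z * ξ^2) / 2 := by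
  have hcR : (1 : ℝ) + Complex.normSq ξ ≠ 0 := by
    have := Complex.normSq_nonneg ξ; linarith
  have hns : ((Complex.normSq ξ : ℝ) : ℂ) = ξ * conj ξ := (Complex.mul_conj ξ).symm
  have hc : (1 : ℂ) + ξ * conj ξ ≠ 0 := by
    rw [← hns]; exact_mod_cast hcR
  have hc2 : ((1 : ℂ) + ξ * conj ξ)^2 ≠ 0 := pow_ne_zero 2 hc
  constructor
  · rintro ⟨r, h1, h2⟩
    rw [Phiz, div_eq_iff hc2] at h1
    rw [Phit, div_eq_iff hc2] at h2
    have h1b := congrArg (starRingEnd ℂ) h1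
    simp only [map_add, map_mul, map_sub, map_pow, map_ofNat, map_one,
      Complex.conj_conj, Complex.conj_ofReal] at h1b
    have key : ((1 : ℂ) + ξ * conj ξ)^2 * (2 * η) =
        ((1 : ℂ) + ξ * conj ξ)^2 * (z - 2 * (t : ℂ) * ξ - conj z * ξ^2) := by
      linear_combination h1 - ξ^2 * h1b - 2 * ξ * h2
    have h := mul_left_cancel₀ hc2 key
    linear_combination h / 2
  · intro hη
    have hηb := congrArg (starRingEnd ℂ) hη
    simp only [map_div₀, map_sub, map_mul, map_pow, map_ofNat,
      Complex.conj_conj, Complex.conj_ofReal] at hηb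
    set r : ℝ := (2 * (z * conj ξ).re + t * (1 - Complex.normSq ξ)) / (1 + Complex.normSq ξ)
      with hrdef
    have hre : 2 * ((z * conj ξ).re : ℂ) = z * conj ξ + conj z * ξ := by
      have h := Complex.add_conj (z * conj ξ)
      simp only [map_mul, Complex.conj_conj] at h
      push_cast at h
      linear_combination -h
    have hr : ((1 : ℂ) + ξ * conj ξ) * (r : ℂ) =
        z * conj ξ + conj z * ξ + (t : ℂ) * (1 - ξ * conj ξ) := by
      rw [hrdef]
      push_cast
      rw [hns, mul_comm, div_mul_cancel₀ _ hc]
      linear_combination hre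
    refine ⟨r, ?_, ?_⟩
    · rw [Phiz, div_eq_iff hc2]
      linear_combination 2 * hη - 2 * ξ^2 * hηb + 2 * ξ * hr
    · rw [Phit, div_eq_iff hc2]
      linear_combination (-2 * conj ξ) * hη - 2 * ξ * hηb + (1 - ξ * conj ξ) * hr

end
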